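/- Local optimality descent (Proposition 4). For every iteration k ≥ 0 and every saddle point (x*, λ*) of the Lagrangian L, the Tracking-ADMM iterates satisfy N ‖λ̄_{k+1} − λ*‖² + 2c Σ_{i=1}^N (z_{i,k+1} − A_i x_i*)ᵀ (λ_{i,k+1} − λ̄_{k+1}) ≤ N ‖λ̄_k − λ*‖² − N ‖λ̄_{k+1} − λ̄_k‖². -/

import Mathlib

open Finset
open scoped RealInnerProductSpace

lemma aux_limit (B C : ℝ) (hC : 0 ≤ C)
    (h : ∀ t : ℝ, 0 < t → t ≤ 1 → 0 ≤ t * B + t ^ 2 * C) : 0 ≤ B := by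
  by_contra hB
  push_neg at hB
  rcases eq_or_lt_of_le hC with hC0 | hCpos
  · have := h 1 one_pos le_rfl; nlinarith
  · have hq : (0:ℝ) < -B / (2 * C) := div_pos (by linarith) (by linarith)
    set t := min 1 (-B / (2 * C)) with ht
    have ht0 : 0 < t := lt_min one_pos hq
    have ht1 : t ≤ 1 := min_le_left _ _
    have h2 : t ≤ -B / (2 * C) := min_le_right _ _
    have := h t ht0 ht1
    have htC : t * C ≤ -B / 2 := by
      rw [le_div_iff₀ (by positivity)] at h2; nlinarith
    nlinarith [mul_pos ht0 ht0]

lemma aux_vi {m p : ℕ} (f : EuclideanSpace ℝ (Fin m) → ℝ) (hf : ConvexOn ℝ Set.univ f)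
    (X : Set (EuclideanSpace ℝ (Fin m))) (hX : Convex ℝ X)
    (A : EuclideanSpace ℝ (Fin m) →ₗ[ℝ] EuclideanSpace ℝ (Fin p))
    (c : ℝ) (hc : 0 < c) (l dd : EuclideanSpace ℝ (Fin p))
    (xp xs : EuclideanSpace ℝ (Fin m)) (hxp : xp ∈ X) (hxs : xs ∈ X)
    (hmin : ∀ y ∈ X, f xp + ⟪l, A xp⟫ + c / 2 * ‖A xp + dd‖ ^ 2
      ≤ f y + ⟪l, A y⟫ + c / 2 * ‖A y + dd‖ ^ 2) :
    f xp + ⟪l + c • (A xp + dd), A xp⟫ ≤ f xs + ⟪l + c • (A xp + dd), A xs⟫ := by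
  set v : EuclideanSpace ℝ (Fin p) := A xs - A xp with hv
  set D : EuclideanSpace ℝ (Fin p) := A xp + dd with hD
  have key : 0 ≤ f xs - f xp + ⟪l + c • D, v⟫ := by
    apply aux_limit _ (c / 2 * ‖v‖ ^ 2) (by positivity)
    intro t ht0 ht1
    have hyX : (1 - t) • xp + t • xs ∈ X := hX hxp hxs (by linarith) (le_of_lt ht0) (by ring)
    have hfy : f ((1 - t) • xp + t • xs) ≤ (1 - t) * f xp + t * f xs :=
      hf.2 (Set.mem_univ xp) (Set.mem_univ xs) (by linarith) (le_of_lt ht0) (by ring)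
    have hAy : A ((1 - t) • xp + t • xs) = A xp + t • v := by
      simp only [map_add, map_smul, hv]
      module
    have h1 := hmin _ hyX
    rw [hAy] at h1
    have hn : ‖(A xp + t • v) + dd‖ ^ 2 = ‖D‖ ^ 2 + 2 * t * ⟪D, v⟫ + t ^ 2 * ‖v‖ ^ 2 := by
      have : (A xp + t • v) + dd = D + t • v := by rw [hD]; abel
      rw [this, ← real_inner_self_eq_norm_sq, inner_add_add_self, real_inner_smul_left,
        real_inner_smul_right, real_inner_smul_left, real_inner_smul_right,
        real_inner_self_eq_norm_sq, real_inner_self_eq_norm_sq, real_inner_comm v D]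
      ring
    have hi : ⟪l, A xp + t • v⟫ = ⟪l, A xp⟫ + t * ⟪l, v⟫ := by
      rw [inner_add_right, real_inner_smul_right]
    rw [hn, hi] at h1
    have hB : ⟪l + c • D, v⟫ = ⟪l, v⟫ + c * ⟪D, v⟫ := by
      rw [inner_add_left, real_inner_smul_left]
    rw [hB]
    nlinarith [hfy]
  have : ⟪l + c • D, v⟫ = ⟪l + c • D, A xs⟫ - ⟪l + c • D, A xp⟫ := by
    rw [hv, inner_sub_right]
  linarith [key, this.le, this.ge]

lemma aux_assembly {p N : ℕ} (hN : (N:ℝ) ≠ 0) (c : ℝ)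
    (s0 s1 sd ls : EuclideanSpace ℝ (Fin p))
    (u lam : Fin N → EuclideanSpace ℝ (Fin p))
    (F1 : s1 = s0 + c • sd) (F2 : sd = ∑ i, u i) (hsum : ∑ i, lam i = s1) :
    (N:ℝ) * ‖(N:ℝ)⁻¹ • s1 - ls‖ ^ 2
      + 2 * c * ∑ i, ⟪u i - (N:ℝ)⁻¹ • sd, lam i - (N:ℝ)⁻¹ • s1⟫
    = (N:ℝ) * ‖(N:ℝ)⁻¹ • s0 - ls‖ ^ 2
      - (N:ℝ) * ‖(N:ℝ)⁻¹ • s1 - (N:ℝ)⁻¹ • s0‖ ^ 2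
      + 2 * c * ∑ i, ⟪u i, lam i - ls⟫ := by
  have expand : ∑ i, ⟪u i - (N:ℝ)⁻¹ • sd, lam i - (N:ℝ)⁻¹ • s1⟫
      = (∑ i, ⟪u i, lam i⟫) - (N:ℝ)⁻¹ * ⟪sd, s1⟫ := by
    have h : ∀ i : Fin N, ⟪u i - (N:ℝ)⁻¹ • sd, lam i - (N:ℝ)⁻¹ • s1⟫
        = ⟪u i, lam i⟫ - (N:ℝ)⁻¹ * ⟪u i, s1⟫ - (N:ℝ)⁻¹ * ⟪sd, lam i⟫
          + (N:ℝ)⁻¹ * ((N:ℝ)⁻¹ * ⟪sd, s1⟫) := by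
      intro i
      simp only [inner_sub_left, inner_sub_right, real_inner_smul_left, real_inner_smul_right]
      ring
    rw [Finset.sum_congr rfl (fun i _ => h i)]
    simp only [Finset.sum_add_distrib, Finset.sum_sub_distrib, ← Finset.mul_sum,
      ← sum_inner, ← inner_sum, F2.symm, hsum, Finset.sum_const, Finset.card_univ,
      Fintype.card_fin, nsmul_eq_mul]
    rw [show (N • sd : EuclideanSpace ℝ (Fin p)) = (N:ℝ) • sd from by
      exact (Nat.cast_smul_eq_nsmul ℝ N sd).symm, real_inner_smul_left]
    set a := ⟪sd, s1⟫ with ha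
    field_simp
    ring
  have expand2 : ∑ i, ⟪u i, lam i - ls⟫ = (∑ i, ⟪u i, lam i⟫) - ⟪sd, ls⟫ := by
    simp only [inner_sub_right, Finset.sum_sub_distrib, ← sum_inner, F2.symm]
  rw [expand, expand2, F1]
  have h1 : ∀ v w : EuclideanSpace ℝ (Fin p), ‖v - w‖ ^ 2 = ⟪v,v⟫ - 2*⟪v,w⟫ + ⟪w,w⟫ := by
    intro v w
    rw [← real_inner_self_eq_norm_sq, inner_sub_left, inner_sub_right, inner_sub_right,
      real_inner_comm w v]
    ring
  simp only [h1, inner_add_left, inner_add_right, real_inner_smul_left, real_inner_smul_right,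
    smul_add, real_inner_comm sd s0]
  set a1 := ⟪s0, s0⟫
  set a2 := ⟪s0, sd⟫
  set a3 := ⟪sd, sd⟫
  set a4 := ⟪s0, ls⟫
  set a5 := ⟪sd, ls⟫
  set a6 := ⟪ls, ls⟫
  set S := ∑ i, ⟪u i, lam i⟫
  field_simp
  ring

theorem local_optimality_descent
    (N p : ℕ) (hN : 0 < N) (n : Fin N → ℕ)
    (f : ∀ i : Fin N, EuclideanSpace ℝ (Fin (n i)) → ℝ)
    (hf : ∀ i, ConvexOn ℝ Set.univ (f i))
    (X : ∀ i : Fin N, Set (EuclideanSpace ℝ (Fin (n i))))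
    (hXne : ∀ i, (X i).Nonempty) (hXcvx : ∀ i, Convex ℝ (X i))
    (hXcpt : ∀ i, IsCompact (X i))
    (A : ∀ i : Fin N, EuclideanSpace ℝ (Fin (n i)) →ₗ[ℝ] EuclideanSpace ℝ (Fin p))
    (bv : Fin N → EuclideanSpace ℝ (Fin p))
    (W : Matrix (Fin N) (Fin N) ℝ)
    (hWrow : ∀ i, ∑ j, W i j = 1)
    (hWcol : ∀ j, ∑ i, W i j = 1)
    (c : ℝ) (hc : 0 < c)
    (x : ∀ i : Fin N, ℕ → EuclideanSpace ℝ (Fin (n i)))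
    (d lam : Fin N → ℕ → EuclideanSpace ℝ (Fin p))
    (hx0 : ∀ i, x i 0 ∈ X i)
    (hd0 : ∀ i, d i 0 = A i (x i 0) - bv i)
    (hxmem : ∀ i k, x i (k + 1) ∈ X i)
    (hxmin : ∀ i k, ∀ y ∈ X i,
      f i (x i (k + 1)) + ⟪∑ j, W i j • lam j k, A i (x i (k + 1))⟫
        + c / 2 * ‖A i (x i (k + 1)) - A i (x i k) + ∑ j, W i j • d j k‖ ^ 2
      ≤ f i y + ⟪∑ j, W i j • lam j k, A i y⟫
        + c / 2 * ‖A i y - A i (x i k) + ∑ j, W i j • d j k‖ ^ 2)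
    (hdup : ∀ i k, d i (k + 1) = (∑ j, W i j • d j k) + A i (x i (k + 1)) - A i (x i k))
    (hlup : ∀ i k, lam i (k + 1) = (∑ j, W i j • lam j k) + c • d i (k + 1))
    -- saddle point (x*, λ*) of the Lagrangian
    (xs : ∀ i, EuclideanSpace ℝ (Fin (n i))) (ls : EuclideanSpace ℝ (Fin p))
    (hxs : ∀ i, xs i ∈ X i)
    (hsaddle1 : ∀ μ : EuclideanSpace ℝ (Fin p),
      (∑ i, f i (xs i)) + ⟪μ, (∑ i, A i (xs i)) - ∑ i, bv i⟫
        ≤ (∑ i, f i (xs i)) + ⟪ls, (∑ i, A i (xs i)) - ∑ i, bv i⟫)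
    (hsaddle2 : ∀ y : (∀ i, EuclideanSpace ℝ (Fin (n i))), (∀ i, y i ∈ X i) →
      (∑ i, f i (xs i)) + ⟪ls, (∑ i, A i (xs i)) - ∑ i, bv i⟫
        ≤ (∑ i, f i (y i)) + ⟪ls, (∑ i, A i (y i)) - ∑ i, bv i⟫) :
    ∀ k,
      (N : ℝ) * ‖((N : ℝ)⁻¹ • ∑ i, lam i (k + 1)) - ls‖ ^ 2
        + 2 * c * ∑ i,
            ⟪(A i (x i (k + 1)) - (N : ℝ)⁻¹ • ∑ j, d j (k + 1)) - A i (xs i),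
              lam i (k + 1) - (N : ℝ)⁻¹ • ∑ j, lam j (k + 1)⟫
      ≤ (N : ℝ) * ‖((N : ℝ)⁻¹ • ∑ i, lam i k) - ls‖ ^ 2
        - (N : ℝ) * ‖((N : ℝ)⁻¹ • ∑ i, lam i (k + 1)) - (N : ℝ)⁻¹ • ∑ i, lam i k‖ ^ 2 := by
  have hN' : (N:ℝ) ≠ 0 := Nat.cast_ne_zero.mpr hN.ne'
  -- feasibility of the saddle point
  have hfeas : (∑ i, A i (xs i)) = ∑ i, bv i := by
    have h := hsaddle1 (ls + ((∑ i, A i (xs i)) - ∑ i, bv i))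
    rw [inner_add_left] at h
    have h0 : ⟪(∑ i, A i (xs i)) - ∑ i, bv i, (∑ i, A i (xs i)) - ∑ i, bv i⟫ ≤ 0 := by
      linarith
    have hg0 : (∑ i, A i (xs i)) - ∑ i, bv i = 0 := real_inner_self_nonpos.mp h0
    exact sub_eq_zero.mp hg0
  -- double stochasticity: column sums
  have hWs : ∀ (v : Fin N → EuclideanSpace ℝ (Fin p)),
      ∑ i, ∑ j, W i j • v j = ∑ j, v j := by
    intro v
    rw [Finset.sum_comm]
    refine Finset.sum_congr rfl fun j _ => ?_
    rw [← Finset.sum_smul, hWcol j, one_smul]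
  -- sum of d trackers
  have hdsum : ∀ k, ∑ i, d i k = (∑ i, A i (x i k)) - ∑ i, bv i := by
    intro k
    induction k with
    | zero => simp only [hd0]; rw [Finset.sum_sub_distrib]
    | succ k ih =>
      simp only [hdup]
      rw [Finset.sum_sub_distrib, Finset.sum_add_distrib, hWs, ih]
      abel
  -- sum of lambdas
  have hlsum : ∀ k, ∑ i, lam i (k + 1) = (∑ i, lam i k) + c • ∑ i, d i (k + 1) := by
    intro k
    simp only [hlup]
    rw [Finset.sum_add_distrib, hWs, Finset.smul_sum]
  intro k
  -- variational inequality for each agent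
  have hvi : ∀ i, f i (x i (k+1)) + ⟪lam i (k+1), A i (x i (k+1))⟫
      ≤ f i (xs i) + ⟪lam i (k+1), A i (xs i)⟫ := by
    intro i
    have hd : d i (k+1)
        = A i (x i (k+1)) + ((∑ j, W i j • d j k) - A i (x i k)) := by
      rw [hdup i k]; abel
    have hl : lam i (k+1) = (∑ j, W i j • lam j k)
        + c • (A i (x i (k+1)) + ((∑ j, W i j • d j k) - A i (x i k))) := by
      rw [hlup i k, hd]
    rw [hl]
    apply aux_vi (f i) (hf i) (X i) (hXcvx i) (A i) c hc _ _ _ _ (hxmem i k) (hxs i)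
    intro y hy
    have h := hxmin i k y hy
    have e1 : ∀ z : EuclideanSpace ℝ (Fin p),
        z + ((∑ j, W i j • d j k) - A i (x i k))
          = z - A i (x i k) + ∑ j, W i j • d j k := by
      intro z; abel
    rw [e1, e1]
    exact h
  -- the key inequality from the saddle point and the VI
  have hstar : ∑ i, ⟪A i (x i (k+1)) - A i (xs i), lam i (k+1) - ls⟫ ≤ 0 := by
    have h2 := hsaddle2 (fun i => x i (k+1)) (fun i => hxmem i k)
    rw [hfeas, sub_self, inner_zero_right, add_zero] at h2
    have hsum1 : ∑ i, ⟪A i (x i (k+1)) - A i (xs i), lam i (k+1) - ls⟫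
        = (∑ i, ⟪A i (x i (k+1)) - A i (xs i), lam i (k+1)⟫)
          - ∑ i, ⟪A i (x i (k+1)) - A i (xs i), ls⟫ := by
      simp only [inner_sub_right, Finset.sum_sub_distrib]
    have hterm : ∀ i, ⟪A i (x i (k+1)) - A i (xs i), lam i (k+1)⟫
        ≤ f i (xs i) - f i (x i (k+1)) := by
      intro i
      have h := hvi i
      have c1 : ⟪A i (x i (k+1)), lam i (k+1)⟫ = ⟪lam i (k+1), A i (x i (k+1))⟫ :=
        real_inner_comm _ _
      have c2 : ⟪A i (xs i), lam i (k+1)⟫ = ⟪lam i (k+1), A i (xs i)⟫ :=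
        real_inner_comm _ _
      rw [inner_sub_left]
      linarith
    have hsum2 : (∑ i, ⟪A i (x i (k+1)) - A i (xs i), lam i (k+1)⟫)
        ≤ ∑ i, (f i (xs i) - f i (x i (k+1))) :=
      Finset.sum_le_sum fun i _ => hterm i
    have hls : ∑ i, ⟪A i (x i (k+1)) - A i (xs i), ls⟫
        = ⟪ls, (∑ i, A i (x i (k+1))) - ∑ i, bv i⟫ := by
      rw [← sum_inner, real_inner_comm, Finset.sum_sub_distrib, hfeas]
    have hsum3 : ∑ i, (f i (xs i) - f i (x i (k+1)))
        = (∑ i, f i (xs i)) - ∑ i, f i (x i (k+1)) := Finset.sum_sub_distrib _ _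
    rw [hsum1, hls]
    linarith
  -- assemble
  have F1 : ∑ i, lam i (k+1) = (∑ i, lam i k) + c • ∑ i, d i (k+1) := hlsum k
  have F2 : ∑ i, d i (k+1) = ∑ i, (A i (x i (k+1)) - A i (xs i)) := by
    rw [hdsum (k+1), ← hfeas, Finset.sum_sub_distrib]
  have key := aux_assembly hN' c (∑ i, lam i k) (∑ i, lam i (k+1)) (∑ i, d i (k+1)) ls
    (fun i => A i (x i (k+1)) - A i (xs i)) (fun i => lam i (k+1)) F1 F2 rfl
  have egoal : ∀ i : Fin N,
      (A i (x i (k + 1)) - (N : ℝ)⁻¹ • ∑ j, d j (k + 1)) - A i (xs i)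
        = (A i (x i (k+1)) - A i (xs i)) - (N : ℝ)⁻¹ • ∑ j, d j (k + 1) := by
    intro i; abel
  simp only [egoal]
  rw [key]
  have : 2 * c * ∑ i, ⟪A i (x i (k+1)) - A i (xs i), lam i (k+1) - ls⟫ ≤ 0 := by
    have h2c : (0:ℝ) < 2 * c := by linarith
    exact mul_nonpos_of_nonneg_of_nonpos (le_of_lt h2c) hstar
  linarith
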